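/- Let κ ∈ (0,1) and a ∈ ℝ with cos²(a) + (1−κ)sin²(a) > 0. With notation as in the weak-measurement setup, the component of E_κ((cos(a)ψ₀ + sin(a)ψ₁) ⊗ |⊥⟩) along probe state |⊥⟩ has squared norm p_⊥ = 1 − κ·sin²(a), and after normalization equals (1/√p_⊥)·(cos(a)ψ₀ + √(1−κ)·sin(a)ψ₁) ⊗ |⊥⟩. -/

import Mathlib

open Real Set

/-- Weak measurement, outcome ⊥ (Proposition 1 of the paper).
The space `H ⊗ ℂ²` is modelled as pairs `(x, y) : H × H`, representing
`x ⊗ |⊥⟩ + y ⊗ |⊤⟩`. The entangler `E_κ = P₀ ⊗ I + P₁ ⊗ R_κ`, where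
`R_κ |⊥⟩ = √(1-κ)|⊥⟩ + √κ|⊤⟩` and `R_κ |⊤⟩ = √κ|⊥⟩ - √(1-κ)|⊤⟩`, and `Pᵢ` is
the orthogonal projection onto `span{ψᵢ}`. -/
theorem stmt_18 {H : Type*} [NormedAddCommGroup H] [InnerProductSpace ℂ H]
    (ψ₀ ψ₁ : H) (h0 : ‖ψ₀‖ = 1) (h1 : ‖ψ₁‖ = 1) (horth : (inner ℂ ψ₀ ψ₁ : ℂ) = 0)
    (κ : ℝ) (hκ : κ ∈ Ioo (0:ℝ) 1) (a : ℝ)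
    (hpos : Real.cos a ^ 2 + (1 - κ) * Real.sin a ^ 2 > 0) :
    let P₀ : H → H := fun x => (inner ℂ ψ₀ x : ℂ) • ψ₀
    let P₁ : H → H := fun x => (inner ℂ ψ₁ x : ℂ) • ψ₁
    let E : H × H → H × H := fun p =>
      (P₀ p.1 + Real.sqrt (1 - κ) • P₁ p.1 + Real.sqrt κ • P₁ p.2,
       Real.sqrt κ • P₁ p.1 - Real.sqrt (1 - κ) • P₁ p.2 + P₀ p.2)
    let bot : H := (E (Real.cos a • ψ₀ + Real.sin a • ψ₁, 0)).1
    ‖bot‖ ^ 2 = 1 - κ * Real.sin a ^ 2 ∧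
      ‖bot‖⁻¹ • bot = (Real.sqrt (1 - κ * Real.sin a ^ 2))⁻¹ •
        (Real.cos a • ψ₀ + (Real.sqrt (1 - κ) * Real.sin a) • ψ₁) := by
  intro P₀ P₁ E bot
  have h00 : (inner ℂ ψ₀ ψ₀ : ℂ) = 1 := by
    rw [inner_self_eq_norm_sq_to_K, h0]; norm_num
  have h11 : (inner ℂ ψ₁ ψ₁ : ℂ) = 1 := by
    rw [inner_self_eq_norm_sq_to_K, h1]; norm_num
  have h10 : (inner ℂ ψ₁ ψ₀ : ℂ) = 0 := by
    rw [← inner_conj_symm, horth]; simp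
  have hκ1 : (0:ℝ) ≤ 1 - κ := by linarith [hκ.2]
  have hbot : bot = Real.cos a • ψ₀ + (Real.sqrt (1 - κ) * Real.sin a) • ψ₁ := by
    show (inner ℂ ψ₀ (Real.cos a • ψ₀ + Real.sin a • ψ₁) : ℂ) • ψ₀
        + Real.sqrt (1 - κ) • ((inner ℂ ψ₁ (Real.cos a • ψ₀ + Real.sin a • ψ₁) : ℂ) • ψ₁)
        + Real.sqrt κ • ((inner ℂ ψ₁ (0:H) : ℂ) • ψ₁)
        = Real.cos a • ψ₀ + (Real.sqrt (1 - κ) * Real.sin a) • ψ₁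
    simp only [RCLike.real_smul_eq_coe_smul (K := ℂ)]
    simp [inner_add_right, inner_smul_right, horth, h00, h11, h10, smul_smul, mul_comm, h0, h1]
  have hval : 1 - κ * Real.sin a ^ 2 = Real.cos a ^ 2 + (1 - κ) * Real.sin a ^ 2 := by
    have := Real.sin_sq_add_cos_sq a; ring_nf; nlinarith [this]
  have hnorm2 : ‖bot‖ ^ 2 = 1 - κ * Real.sin a ^ 2 := by
    rw [hbot]
    have horth2 : (inner ℂ (Real.cos a • ψ₀) ((Real.sqrt (1 - κ) * Real.sin a) • ψ₁) : ℂ) = 0 := by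
      simp only [RCLike.real_smul_eq_coe_smul (K := ℂ)]
      simp [inner_smul_left, inner_smul_right, horth]
    rw [@norm_add_sq ℂ _ _ _ _ , horth2, hval]
    simp [norm_smul, h0, h1, mul_pow, abs_mul, sq_abs, Real.sq_sqrt hκ1]
  refine ⟨hnorm2, ?_⟩
  have hnn : ‖bot‖ = Real.sqrt (1 - κ * Real.sin a ^ 2) := by
    rw [← hnorm2, Real.sqrt_sq (norm_nonneg _)]
  rw [hnn, hbot]
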